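/- Let M be a real n×n matrix such that M_{ij} ≥ 0 for all i ≠ j and Σ_j M_{ij} = 0 for every row i, let c ≥ 0 and t ≥ 0. Then for every vector x ∈ ℝⁿ, the vector exp(t·(M - c·1))·x satisfies the sup-norm contraction bound max_i |(exp(t·(M - c·1))·x)_i| ≤ e^{-ct} · max_i |x_i|. -/

import Mathlib

open Matrix

open Nat

attribute [local instance] Matrix.linftyOpNormedRing Matrix.linftyOpNormedAlgebra

/-- Evaluation of an entry of a matrix, as a continuous linear map. -/
noncomputable def entryCLM {n : ℕ} (i j : Fin n) :
    Matrix (Fin n) (Fin n) ℝ →L[ℝ] ℝ :=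
  ((ContinuousLinearMap.proj j : (Fin n → ℝ) →L[ℝ] ℝ).comp
    (ContinuousLinearMap.proj i : (Fin n → Fin n → ℝ) →L[ℝ] (Fin n → ℝ)))

lemma entryCLM_apply {n : ℕ} (i j : Fin n) (A : Matrix (Fin n) (Fin n) ℝ) :
    entryCLM i j A = A i j := by rfl

/-- Entries of `exp N` have a series representation. -/
lemma hasSum_exp_entry {n : ℕ} (N : Matrix (Fin n) (Fin n) ℝ) (i j : Fin n) :
    HasSum (fun k : ℕ => (k !⁻¹ : ℝ) * (N ^ k) i j) ((NormedSpace.exp N) i j) := by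
  have h : HasSum (fun k : ℕ => (k !⁻¹ : ℝ) • N ^ k) (NormedSpace.exp N) := by
    rw [NormedSpace.exp_eq_tsum ℝ]
    exact (NormedSpace.expSeries_summable' (𝕂 := ℝ) N).hasSum
  have := (entryCLM i j).hasSum h
  simpa [entryCLM_apply, smul_eq_mul] using this

lemma exp_entry_nonneg {n : ℕ} {N : Matrix (Fin n) (Fin n) ℝ}
    (hN : ∀ i j, 0 ≤ N i j) (i j : Fin n) : 0 ≤ (NormedSpace.exp N) i j := by
  refine (hasSum_exp_entry N i j).nonneg fun k => ?_
  have hpow : ∀ k : ℕ, ∀ i j, 0 ≤ (N ^ k) i j := by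
    intro k
    induction k with
    | zero => intro i j; by_cases h : i = j <;> simp [pow_zero, Matrix.one_apply, h]
    | succ k ih =>
      intro i j
      rw [pow_succ, Matrix.mul_apply]
      exact Finset.sum_nonneg fun l _ => mul_nonneg (ih i l) (hN l j)
  exact mul_nonneg (by positivity) (hpow k i j)

lemma pow_row_sum {n : ℕ} {N : Matrix (Fin n) (Fin n) ℝ} {a : ℝ}
    (hrow : ∀ i, ∑ j, N i j = a) (k : ℕ) (i : Fin n) :
    ∑ j, (N ^ k) i j = a ^ k := by
  induction k generalizing i with
  | zero =>
    simp [pow_zero, Matrix.one_apply]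
  | succ k ih =>
    rw [pow_succ]
    simp_rw [Matrix.mul_apply]
    rw [Finset.sum_comm]
    calc ∑ l, ∑ j, (N ^ k) i l * N l j
        = ∑ l, (N ^ k) i l * a := by
          refine Finset.sum_congr rfl fun l _ => ?_
          rw [← Finset.mul_sum, hrow l]
      _ = a ^ k * a := by rw [← Finset.sum_mul, ih i]
      _ = a ^ (k + 1) := by ring

/-- Row sums of `exp N` when all row sums of `N` equal `a`. -/
lemma exp_row_sum {n : ℕ} {N : Matrix (Fin n) (Fin n) ℝ} {a : ℝ}
    (hrow : ∀ i, ∑ j, N i j = a) (i : Fin n) :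
    ∑ j, (NormedSpace.exp N) i j = Real.exp a := by
  have h1 : HasSum (fun k : ℕ => (k !⁻¹ : ℝ) * a ^ k) (Real.exp a) := by
    have h := (NormedSpace.expSeries_summable' (𝕂 := ℝ) a).hasSum
    have he : NormedSpace.exp a = ∑' k : ℕ, (k !⁻¹ : ℝ) • a ^ k := by
      rw [NormedSpace.exp_eq_tsum ℝ]
    rw [← he] at h
    simpa [Real.exp_eq_exp_ℝ, smul_eq_mul] using h
  have h2 : HasSum (fun k : ℕ => ∑ j, (k !⁻¹ : ℝ) * (N ^ k) i j)
      (∑ j, (NormedSpace.exp N) i j) :=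
    hasSum_sum fun j _ => hasSum_exp_entry N i j
  have h3 : (fun k : ℕ => ∑ j, (k !⁻¹ : ℝ) * (N ^ k) i j)
      = fun k : ℕ => (k !⁻¹ : ℝ) * a ^ k := by
    funext k
    rw [← Finset.mul_sum, pow_row_sum hrow k i]
  rw [h3] at h2
  exact h2.unique h1

/-- Sup-norm bound for `exp N` applied to a vector. -/
lemma exp_mulVec_bound {n : ℕ} {N : Matrix (Fin n) (Fin n) ℝ} {a : ℝ}
    (hN : ∀ i j, 0 ≤ N i j) (hrow : ∀ i, ∑ j, N i j = a) (x : Fin n → ℝ) :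
    ‖(NormedSpace.exp N).mulVec x‖ ≤ Real.exp a * ‖x‖ := by
  refine (pi_norm_le_iff_of_nonneg (by positivity)).2 fun i => ?_
  rw [Matrix.mulVec, dotProduct]
  calc ‖∑ j, (NormedSpace.exp N) i j * x j‖
      ≤ ∑ j, ‖(NormedSpace.exp N) i j * x j‖ := norm_sum_le _ _
    _ ≤ ∑ j, (NormedSpace.exp N) i j * ‖x‖ := by
        refine Finset.sum_le_sum fun j _ => ?_
        rw [norm_mul, Real.norm_of_nonneg (exp_entry_nonneg hN i j)]
        exact mul_le_mul_of_nonneg_left (norm_le_pi_norm x j) (exp_entry_nonneg hN i j)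
    _ = Real.exp a * ‖x‖ := by rw [← Finset.sum_mul, exp_row_sum hrow i]


/-- Discrete maximum principle / sup-norm contraction (estimate (90) of the paper):
if `M` has nonnegative off-diagonal entries and zero row sums, `c ≥ 0` and `t ≥ 0`,
then `exp (t • (M - c • 1))` is a sup-norm contraction with factor `e^{-ct}`.
The norm on `Fin n → ℝ` is the sup norm. -/
theorem stmt11 {n : ℕ} (M : Matrix (Fin n) (Fin n) ℝ)
    (hoff : ∀ i j, i ≠ j → 0 ≤ M i j) (hrow : ∀ i, ∑ j, M i j = 0)
    (c t : ℝ) (hc : 0 ≤ c) (ht : 0 ≤ t) (x : Fin n → ℝ) :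
    ‖(NormedSpace.exp
        (t • (M - c • (1 : Matrix (Fin n) (Fin n) ℝ)))).mulVec x‖
      ≤ Real.exp (-c * t) * ‖x‖ := by
  classical
  set s : ℝ := ∑ i, |M i i| with hs
  have hs0 : 0 ≤ s := Finset.sum_nonneg fun i _ => abs_nonneg _
  set a : ℝ := t * s with ha
  have ha0 : 0 ≤ a := mul_nonneg ht hs0
  set N : Matrix (Fin n) (Fin n) ℝ := t • M + a • 1 with hNdef
  -- entries of N are nonnegative
  have hN : ∀ i j, 0 ≤ N i j := by
    intro i j
    by_cases h : i = j
    · subst h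
      have h1 : |M i i| ≤ s :=
        Finset.single_le_sum (f := fun i => |M i i|) (fun k _ => abs_nonneg _)
          (Finset.mem_univ i)
      have : -(t * |M i i|) ≤ t * M i i := by
        have := neg_abs_le (M i i)
        nlinarith
      simp only [hNdef, Matrix.add_apply, Matrix.smul_apply, Matrix.one_apply_eq,
        smul_eq_mul, mul_one]
      nlinarith
    · simp only [hNdef, Matrix.add_apply, Matrix.smul_apply, Matrix.one_apply_ne h,
        smul_eq_mul, mul_zero, add_zero]
      exact mul_nonneg ht (hoff i j h)
  -- row sums of N all equal a
  have hNrow : ∀ i, ∑ j, N i j = a := by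
    intro i
    simp only [hNdef, Matrix.add_apply, Matrix.smul_apply, smul_eq_mul,
      Finset.sum_add_distrib, ← Finset.mul_sum, hrow i, mul_zero, zero_add]
    simp [Matrix.one_apply]
  -- decompose the exponent
  set r : ℝ := -(a + c * t) with hr
  have hdecomp : t • (M - c • (1 : Matrix (Fin n) (Fin n) ℝ)) = N + r • 1 := by
    simp only [hNdef, hr, smul_sub, smul_smul]
    ext i j
    simp [Matrix.add_apply, Matrix.sub_apply, Matrix.smul_apply, smul_eq_mul]
    ring
  have hcomm : Commute N (r • (1 : Matrix (Fin n) (Fin n) ℝ)) :=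
    (Commute.one_right N).smul_right r
  have hexp : NormedSpace.exp (t • (M - c • (1 : Matrix (Fin n) (Fin n) ℝ)))
      = NormedSpace.exp N * (Real.exp r • 1) := by
    rw [hdecomp, Matrix.exp_add_of_commute N (r • 1) hcomm]
    congr 1
    rw [Matrix.smul_one_eq_diagonal, Matrix.exp_diagonal]
    have : NormedSpace.exp (fun _ : Fin n => r) = fun _ : Fin n => Real.exp r := by
      funext i
      rw [Pi.coe_exp, Real.exp_eq_exp_ℝ]
    rw [this, ← Matrix.smul_one_eq_diagonal]
  rw [hexp, ← Matrix.mulVec_mulVec]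
  have h1 : (Real.exp r • (1 : Matrix (Fin n) (Fin n) ℝ)).mulVec x = Real.exp r • x := by
    rw [Matrix.smul_mulVec, Matrix.one_mulVec]
  rw [h1, Matrix.mulVec_smul, norm_smul, Real.norm_eq_abs,
    abs_of_pos (Real.exp_pos r)]
  calc Real.exp r * ‖(NormedSpace.exp N).mulVec x‖
      ≤ Real.exp r * (Real.exp a * ‖x‖) := by
        exact mul_le_mul_of_nonneg_left (exp_mulVec_bound hN hNrow x)
          (Real.exp_pos r).le
    _ = Real.exp (-c * t) * ‖x‖ := by
        rw [← mul_assoc, ← Real.exp_add]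
        congr 2
        rw [hr]; ring
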